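/- Given a G-equivariant one-step method Ψ_h: TQ → TQ (Ψ_h ∘ TΦ_g = TΦ_g ∘ Ψ_h for all g ∈ G) and a G-invariant Lagrangian L: TQ → ℝ, the shooting-based discrete Lagrangian L_d(q_0, q_1) = h∑_{i=0}^n b_i L(q^i, v^i), defined via the boundary-value sequence (q^{i+1}, v^{i+1}) = Ψ_{(c_{i+1}−c_i)h}(q^i, v^i), q^0 = q_0, q^n = q_1, is G-invariant: L_d(g·q_0, g·q_1) = L_d(q_0, q_1). -/

import Mathlib

open Finset

/-- The shooting boundary-value sequence on `TQ = P × V`: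
`(qⁱ⁺¹,vⁱ⁺¹) = Ψ_{(cᵢ₊₁−cᵢ)h}(qⁱ,vⁱ)` with `q⁰ = q₀` and `qⁿ = q₁`. -/
def IsShootingSeq {P V : Type*} (n : ℕ) (Ψ : ℝ → P × V → P × V) (c : ℕ → ℝ)
    (h : ℝ) (q0 q1 : P) (s : ℕ → P × V) : Prop :=
  (∀ i < n, s (i + 1) = Ψ ((c (i + 1) - c i) * h) (s i)) ∧
    (s 0).1 = q0 ∧ (s n).1 = q1

/-- Given a `G`-equivariant one-step method `Ψ_h : TQ → TQ`
(`Ψ_h ∘ TΦ_g = TΦ_g ∘ Ψ_h`, with `TΦ_g(q,v) = (g•q, g•v)`) and a `G`-invariant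
Lagrangian `L : TQ → ℝ`, the shooting-based discrete Lagrangian
`L_d(q₀,q₁) = h ∑ᵢ bᵢ L(qⁱ,vⁱ)` is `G`-invariant: `L_d(g•q₀, g•q₁) = L_d(q₀,q₁)`. -/
theorem shooting_discrete_lagrangian_G_invariant
    {G P V : Type*} [Group G] [MulAction G P] [MulAction G V]
    (n : ℕ) (Ψ : ℝ → P × V → P × V)
    (hequiv : ∀ (t : ℝ) (g : G) (x : P × V),
      Ψ t (g • x.1, g • x.2) = (g • (Ψ t x).1, g • (Ψ t x).2))
    (c b : ℕ → ℝ) (h : ℝ)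
    (L : P × V → ℝ)
    (hLinv : ∀ (g : G) (q : P) (v : V), L (g • q, g • v) = L (q, v))
    (Ld : P → P → ℝ)
    (hLd : ∀ (q0 q1 : P) (s : ℕ → P × V),
      IsShootingSeq n Ψ c h q0 q1 s →
      Ld q0 q1 = h * ∑ i ∈ Finset.range (n + 1), b i * L (s i))
    (g : G) (q0 q1 : P)
    (hex : ∃ s : ℕ → P × V, IsShootingSeq n Ψ c h q0 q1 s) :
    Ld (g • q0) (g • q1) = Ld q0 q1 := by
  obtain ⟨s, hstep, h0, h1⟩ := hex
  set s' : ℕ → P × V := fun i => (g • (s i).1, g • (s i).2) with hs'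
  have hseq' : IsShootingSeq n Ψ c h (g • q0) (g • q1) s' := by
    refine ⟨fun i hi => ?_, by simp [hs', h0], by simp [hs', h1]⟩
    simp only [hs']
    rw [hequiv, ← hstep i hi]
  rw [hLd _ _ s' hseq', hLd _ _ s ⟨hstep, h0, h1⟩]
  congr 1
  refine Finset.sum_congr rfl fun i _ => ?_
  simp [hs', hLinv]
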